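/- Let (X,d) be a Polish metric space and a,b>0. For all finite nonnegative Borel measures μ₁,μ₂ on X, W₁^{a,b}(μ₁,μ₂) = inf over γ ∈ M of { a|μ₁−γ₁| + a|μ₂−γ₂| + b∫_{X×X} d(x,y) dγ(x,y) }, where γ₁,γ₂ are the two marginals of γ, M = { γ ∈ M(X×X) : ∫_{X×X} d(x,y) dγ(x,y) < ∞ }, and |μᵢ−γᵢ| denotes the total variation norm of the signed measure μᵢ−γᵢ. -/

import Mathlib

open MeasureTheory ENNReal

section GW

variable {X : Type*} [MeasurableSpace X] [MetricSpace X]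

/-- A transference plan between two finite measures `μ` and `ν` of equal mass:
a Borel probability measure `π` on `X × X` with `|μ| π(A × X) = μ A` and
`|ν| π(X × B) = ν B`. -/
def IsCoupling (μ ν : Measure X) (π : Measure (X × X)) : Prop :=
  IsProbabilityMeasure π ∧
  (∀ A : Set X, MeasurableSet A → μ Set.univ * π (A ×ˢ (Set.univ : Set X)) = μ A) ∧
  (∀ B : Set X, MeasurableSet B → ν Set.univ * π ((Set.univ : Set X) ×ˢ B) = ν B)

/-- The (mass-scaled) `p`-Wasserstein distance
`W_p(μ,ν) = (|μ| ⨅_π ∫ d(x,y)^p dπ)^{1/p}`, as an extended nonnegative real. -/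
noncomputable def WpE (p : ℝ) (μ ν : Measure X) : ℝ≥0∞ :=
  (μ Set.univ * ⨅ π : {π : Measure (X × X) // IsCoupling μ ν π},
      ∫⁻ z, edist z.1 z.2 ^ p ∂(π.1)) ^ (1 / p)

/-- `μ ∈ M_p(X)`: `μ` is a finite (nonnegative Borel) measure with finite `p`-moment. -/
def MemMp (p : ℝ) (μ : Measure X) : Prop :=
  IsFiniteMeasure μ ∧ ∀ x₀ : X, ∫⁻ x, edist x x₀ ^ p ∂μ ≠ ∞

/-- Total variation mass `|μ - ν|` of the difference of two (finite) measures,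
as an extended nonnegative real. -/
noncomputable def tvE (μ ν : Measure X) : ℝ≥0∞ := (μ - ν) Set.univ + (ν - μ) Set.univ

/-- Total variation mass `|μ - ν|` as a real number. -/
noncomputable def tv (μ ν : Measure X) : ℝ := (tvE μ ν).toReal

/-- The generalized Wasserstein distance
`W_p^{a,b}(μ,ν) = inf { a|μ-μ'| + a|ν-ν'| + b W_p(μ',ν') : μ',ν' ∈ M_p(X), |μ'|=|ν'| }`,
as an extended nonnegative real. -/
noncomputable def genWE (a b p : ℝ) (μ ν : Measure X) : ℝ≥0∞ :=
  ⨅ (μ' : Measure X) (ν' : Measure X) (_ : MemMp p μ') (_ : MemMp p ν')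
      (_ : μ' Set.univ = ν' Set.univ),
    ENNReal.ofReal a * tvE μ μ' + ENNReal.ofReal a * tvE ν ν' +
      ENNReal.ofReal b * WpE p μ' ν'

/-- The generalized Wasserstein distance `W_p^{a,b}` as a real number. -/
noncomputable def genW (a b p : ℝ) (μ ν : Measure X) : ℝ := (genWE a b p μ ν).toReal

/-- `I(φ) = inf_{s ≥ 0} (sφ + a|1-s|)`. -/
noncomputable def Idual (a φ : ℝ) : ℝ :=
  sInf {v : ℝ | ∃ s : ℝ, 0 ≤ s ∧ v = s * φ + a * |1 - s|}

end GW

section Aux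

set_option linter.unusedSectionVars false

variable {α : Type*} [MeasurableSpace α]

lemma measure_le_sub_add (μ ν : Measure α) [IsFiniteMeasure μ] [IsFiniteMeasure ν] :
    μ ≤ (μ - ν) + ν := by
  obtain ⟨s, hs, hνμ, hμν⟩ := MeasureTheory.hahn_decomposition (μ := μ) (ν := ν)
  have hrle : ν.restrict s ≤ μ.restrict s := by
    refine Measure.le_iff.2 fun t ht => ?_
    rw [Measure.restrict_apply ht, Measure.restrict_apply ht]
    exact hνμ _ (ht.inter hs) Set.inter_subset_right
  set d₀ := μ.restrict s - ν.restrict s with hd₀def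
  have hd₀ : ∀ t, MeasurableSet t → d₀ t = μ (t ∩ s) - ν (t ∩ s) := by
    intro t ht
    rw [hd₀def, Measure.sub_apply ht hrle, Measure.restrict_apply ht, Measure.restrict_apply ht]
  have h1 : μ ≤ d₀ + ν := by
    refine Measure.le_iff.2 fun t ht => ?_
    have h2 : μ (t \ s) ≤ ν (t \ s) := hμν _ (ht.diff hs) fun x hx => hx.2
    have h3 : ν (t ∩ s) ≤ μ (t ∩ s) := hνμ _ (ht.inter hs) Set.inter_subset_right
    have h4 : μ (t ∩ s) = d₀ t + ν (t ∩ s) := by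
      rw [hd₀ t ht, tsub_add_cancel_of_le h3]
    calc μ t = μ (t ∩ s) + μ (t \ s) := (measure_inter_add_diff t hs).symm
      _ ≤ (d₀ t + ν (t ∩ s)) + ν (t \ s) := add_le_add h4.le h2
      _ = d₀ t + (ν (t ∩ s) + ν (t \ s)) := add_assoc _ _ _
      _ = d₀ t + ν t := by rw [measure_inter_add_diff t hs]
      _ = (d₀ + ν) t := by simp
  have h2 : d₀ ≤ μ - ν := by
    rw [Measure.sub_def]
    refine le_sInf fun d hd => Measure.le_iff.2 fun t ht => ?_
    have hd' : μ (t ∩ s) ≤ d (t ∩ s) + ν (t ∩ s) := by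
      simpa using Measure.le_iff'.1 hd (t ∩ s)
    rw [hd₀ t ht, tsub_le_iff_right]
    exact hd'.trans (add_le_add_left (measure_mono Set.inter_subset_left) _)
  calc μ ≤ d₀ + ν := h1
    _ ≤ (μ - ν) + ν := add_le_add_left h2 ν

lemma measure_sub_mono_left {μ ν : Measure α} (ρ : Measure α) [IsFiniteMeasure ν]
    [IsFiniteMeasure ρ] (h : μ ≤ ν) : μ - ρ ≤ ν - ρ :=
  Measure.sub_le_of_le_add (h.trans (measure_le_sub_add ν ρ))

lemma tvE_le_of_le [MetricSpace α] {μ₁ ν μ' : Measure α} [IsFiniteMeasure μ₁]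
    [IsFiniteMeasure ν] [IsFiniteMeasure μ'] (h : μ' ≤ ν) :
    tvE μ₁ μ' ≤ tvE μ₁ ν + (ν Set.univ - μ' Set.univ) := by
  have hA : (μ₁ - μ') Set.univ ≤ (μ₁ - ν) Set.univ + (ν Set.univ - μ' Set.univ) := by
    have hle : μ₁ - μ' ≤ (μ₁ - ν) + (ν - μ') := by
      apply Measure.sub_le_of_le_add
      calc μ₁ ≤ (μ₁ - ν) + ν := measure_le_sub_add μ₁ ν
        _ = (μ₁ - ν) + ((ν - μ') + μ') := by rw [Measure.sub_add_cancel_of_le h]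
        _ = ((μ₁ - ν) + (ν - μ')) + μ' := (add_assoc _ _ _).symm
    have h5 := Measure.le_iff'.1 hle Set.univ
    simp only [Measure.coe_add, Pi.add_apply] at h5
    rwa [Measure.sub_apply MeasurableSet.univ h] at h5
  have hB : (μ' - μ₁) Set.univ ≤ (ν - μ₁) Set.univ :=
    Measure.le_iff'.1 (measure_sub_mono_left μ₁ h) Set.univ
  calc tvE μ₁ μ' = (μ₁ - μ') Set.univ + (μ' - μ₁) Set.univ := rfl
    _ ≤ ((μ₁ - ν) Set.univ + (ν Set.univ - μ' Set.univ)) + (ν - μ₁) Set.univ :=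
        add_le_add hA hB
    _ = tvE μ₁ ν + (ν Set.univ - μ' Set.univ) := by rw [tvE]; ring

lemma tvE_ne_top [MetricSpace α] (μ ν : Measure α) [IsFiniteMeasure μ] [IsFiniteMeasure ν] :
    tvE μ ν ≠ ∞ := by
  have h1 : (μ - ν) Set.univ ≤ μ Set.univ := Measure.le_iff'.1 Measure.sub_le Set.univ
  have h2 : (ν - μ) Set.univ ≤ ν Set.univ := Measure.le_iff'.1 Measure.sub_le Set.univ
  exact ENNReal.add_ne_top.2 ⟨(h1.trans_lt (measure_lt_top μ _)).ne,
    (h2.trans_lt (measure_lt_top ν _)).ne⟩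

end Aux

section Aux2

variable {X : Type*} [MeasurableSpace X] [MetricSpace X]

set_option linter.unusedSectionVars false

/-- The normalization of a plan is a coupling of its marginals. -/
lemma isCoupling_inv_smul (γ : Measure (X × X)) [IsFiniteMeasure γ]
    (h0 : γ Set.univ ≠ 0) :
    IsCoupling γ.fst γ.snd ((γ Set.univ)⁻¹ • γ) := by
  have hmt : γ Set.univ ≠ ∞ := measure_ne_top γ _
  refine ⟨⟨by rw [Measure.smul_apply, smul_eq_mul, ENNReal.inv_mul_cancel h0 hmt]⟩, ?_, ?_⟩
  · intro A hA
    rw [Measure.fst_univ, Measure.fst_apply hA, Measure.smul_apply, smul_eq_mul,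
      Set.prod_univ, ← mul_assoc, ENNReal.mul_inv_cancel h0 hmt, one_mul]
  · intro B hB
    rw [Measure.snd_univ, Measure.snd_apply hB, Measure.smul_apply, smul_eq_mul,
      Set.univ_prod, ← mul_assoc, ENNReal.mul_inv_cancel h0 hmt, one_mul]

lemma WpE_one_le (γ : Measure (X × X)) [IsFiniteMeasure γ] :
    WpE 1 γ.fst γ.snd ≤ ∫⁻ z, edist z.1 z.2 ∂γ := by
  have h11 : (1 : ℝ) / 1 = 1 := by norm_num
  by_cases h0 : γ Set.univ = 0
  · rw [WpE, Measure.fst_univ, h0, zero_mul, h11, ENNReal.rpow_one]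
    exact zero_le
  · have hmt : γ Set.univ ≠ ∞ := measure_ne_top γ _
    rw [WpE, h11, ENNReal.rpow_one, Measure.fst_univ]
    calc γ Set.univ * ⨅ π : {π : Measure (X × X) // IsCoupling γ.fst γ.snd π},
          ∫⁻ z, edist z.1 z.2 ^ (1 : ℝ) ∂(π.1)
        ≤ γ Set.univ * ∫⁻ z, edist z.1 z.2 ^ (1 : ℝ) ∂((γ Set.univ)⁻¹ • γ) :=
          mul_le_mul_right (iInf_le _ (⟨(γ Set.univ)⁻¹ • γ, isCoupling_inv_smul γ h0⟩ :
            {π : Measure (X × X) // IsCoupling γ.fst γ.snd π})) _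
      _ = γ Set.univ * ((γ Set.univ)⁻¹ * ∫⁻ z, edist z.1 z.2 ^ (1 : ℝ) ∂γ) := by
          rw [lintegral_smul_measure, smul_eq_mul]
      _ = ∫⁻ z, edist z.1 z.2 ^ (1 : ℝ) ∂γ := by
          rw [← mul_assoc, ENNReal.mul_inv_cancel h0 hmt, one_mul]
      _ = ∫⁻ z, edist z.1 z.2 ∂γ := by simp [ENNReal.rpow_one]

/-- Scaling a coupling by the common mass recovers the marginals. -/
lemma fst_smul_coupling {μ' ν' : Measure X} {π : Measure (X × X)}
    (h : IsCoupling μ' ν' π) : (μ' Set.univ • π).fst = μ' := by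
  ext A hA
  rw [Measure.fst_apply hA, Measure.smul_apply, smul_eq_mul, ← Set.prod_univ]
  exact h.2.1 A hA

lemma snd_smul_coupling {μ' ν' : Measure X} {π : Measure (X × X)}
    (hmass : μ' Set.univ = ν' Set.univ)
    (h : IsCoupling μ' ν' π) : (μ' Set.univ • π).snd = ν' := by
  ext B hB
  rw [Measure.snd_apply hB, Measure.smul_apply, smul_eq_mul, ← Set.univ_prod, hmass]
  exact h.2.2 B hB

/-- The product coupling. -/
lemma isCoupling_prod {μ' ν' : Measure X} [IsFiniteMeasure μ'] [IsFiniteMeasure ν']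
    (hmass : μ' Set.univ = ν' Set.univ) (h0 : μ' Set.univ ≠ 0) :
    IsCoupling μ' ν' (((μ' Set.univ)⁻¹ • μ').prod ((ν' Set.univ)⁻¹ • ν')) := by
  have hmt : μ' Set.univ ≠ ∞ := measure_ne_top μ' _
  have h0' : ν' Set.univ ≠ 0 := by rw [← hmass]; exact h0
  have hmt' : ν' Set.univ ≠ ∞ := measure_ne_top ν' _
  refine ⟨⟨?_⟩, ?_, ?_⟩
  · rw [← Set.univ_prod_univ, Measure.prod_prod, Measure.smul_apply, Measure.smul_apply,
      smul_eq_mul, smul_eq_mul, ENNReal.inv_mul_cancel h0 hmt, ENNReal.inv_mul_cancel h0' hmt',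
      one_mul]
  · intro A hA
    rw [Measure.prod_prod, Measure.smul_apply, Measure.smul_apply, smul_eq_mul, smul_eq_mul,
      ENNReal.inv_mul_cancel h0' hmt', mul_one, ← mul_assoc, ENNReal.mul_inv_cancel h0 hmt,
      one_mul]
  · intro B hB
    rw [Measure.prod_prod, Measure.smul_apply, Measure.smul_apply, smul_eq_mul, smul_eq_mul,
      ENNReal.inv_mul_cancel h0 hmt, one_mul, ← mul_assoc, ENNReal.mul_inv_cancel h0' hmt',
      one_mul]

variable [BorelSpace X]

/-- First moment of the first marginal of a plan restricted to a product of balls. -/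
lemma memMp_one_fst_restrict (γ : Measure (X × X)) [IsFiniteMeasure γ] (x₀ : X) (n : ℕ) :
    MemMp 1 ((γ.restrict ((Metric.closedBall x₀ n) ×ˢ (Metric.closedBall x₀ n))).fst) := by
  set S := (Metric.closedBall x₀ n) ×ˢ (Metric.closedBall x₀ n) with hSdef
  have hSmeas : MeasurableSet S := measurableSet_closedBall.prod measurableSet_closedBall
  set R := γ.restrict S with hRdef
  refine ⟨inferInstance, fun x₁ => ?_⟩
  have hmeas : Measurable fun x : X => edist x x₁ :=
    (continuous_id.edist continuous_const).measurable
  have hmap : ∫⁻ x, edist x x₁ ^ (1 : ℝ) ∂(R.fst) = ∫⁻ z : X × X, edist z.1 x₁ ∂(R) := by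
    simp only [ENNReal.rpow_one]
    rw [Measure.fst, lintegral_map hmeas measurable_fst]
  rw [hmap]
  set C := ENNReal.ofReal n + edist x₀ x₁ with hCdef
  have hbound : ∀ᵐ z : X × X ∂(R), edist z.1 x₁ ≤ C := by
    rw [hRdef, ae_restrict_iff' hSmeas]
    refine ae_of_all _ fun z hz => ?_
    have h1 : edist z.1 x₀ ≤ ENNReal.ofReal n := by
      rw [edist_dist]
      exact ENNReal.ofReal_le_ofReal hz.1
    calc edist z.1 x₁ ≤ edist z.1 x₀ + edist x₀ x₁ := edist_triangle _ _ _
      _ ≤ C := add_le_add_left h1 _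
  have hle : ∫⁻ z : X × X, edist z.1 x₁ ∂(R) ≤ C * R Set.univ := by
    calc ∫⁻ z : X × X, edist z.1 x₁ ∂(R) ≤ ∫⁻ _, C ∂(R) := lintegral_mono_ae hbound
      _ = C * R Set.univ := lintegral_const C
  have hCt : C ≠ ∞ := ENNReal.add_ne_top.2 ⟨ENNReal.ofReal_ne_top, edist_ne_top _ _⟩
  exact (hle.trans_lt (ENNReal.mul_lt_top hCt.lt_top (measure_lt_top R _))).ne

/-- First moment of the second marginal of a plan restricted to a product of balls. -/
lemma memMp_one_snd_restrict (γ : Measure (X × X)) [IsFiniteMeasure γ] (x₀ : X) (n : ℕ) :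
    MemMp 1 ((γ.restrict ((Metric.closedBall x₀ n) ×ˢ (Metric.closedBall x₀ n))).snd) := by
  set S := (Metric.closedBall x₀ n) ×ˢ (Metric.closedBall x₀ n) with hSdef
  have hSmeas : MeasurableSet S := measurableSet_closedBall.prod measurableSet_closedBall
  set R := γ.restrict S with hRdef
  refine ⟨inferInstance, fun x₁ => ?_⟩
  have hmeas : Measurable fun x : X => edist x x₁ :=
    (continuous_id.edist continuous_const).measurable
  have hmap : ∫⁻ x, edist x x₁ ^ (1 : ℝ) ∂(R.snd) = ∫⁻ z : X × X, edist z.2 x₁ ∂(R) := by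
    simp only [ENNReal.rpow_one]
    rw [Measure.snd, lintegral_map hmeas measurable_snd]
  rw [hmap]
  set C := ENNReal.ofReal n + edist x₀ x₁ with hCdef
  have hbound : ∀ᵐ z : X × X ∂(R), edist z.2 x₁ ≤ C := by
    rw [hRdef, ae_restrict_iff' hSmeas]
    refine ae_of_all _ fun z hz => ?_
    have h1 : edist z.2 x₀ ≤ ENNReal.ofReal n := by
      rw [edist_dist]
      exact ENNReal.ofReal_le_ofReal hz.2
    calc edist z.2 x₁ ≤ edist z.2 x₀ + edist x₀ x₁ := edist_triangle _ _ _
      _ ≤ C := add_le_add_left h1 _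
  have hle : ∫⁻ z : X × X, edist z.2 x₁ ∂(R) ≤ C * R Set.univ := by
    calc ∫⁻ z : X × X, edist z.2 x₁ ∂(R) ≤ ∫⁻ _, C ∂(R) := lintegral_mono_ae hbound
      _ = C * R Set.univ := lintegral_const C
  have hCt : C ≠ ∞ := ENNReal.add_ne_top.2 ⟨ENNReal.ofReal_ne_top, edist_ne_top _ _⟩
  exact (hle.trans_lt (ENNReal.mul_lt_top hCt.lt_top (measure_lt_top R _))).ne

end Aux2

/-- **Formulation of `W₁^{a,b}` via (not necessarily probability) plans** (Lemma 5.3).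
`W₁^{a,b}(μ₁,μ₂) = inf_{γ ∈ M} { a|μ₁-γ₁| + a|μ₂-γ₂| + b ∫ d dγ }`, where `γ₁, γ₂` are
the marginals of `γ` and `M` is the set of finite nonnegative Borel measures on `X × X`
with `∫ d dγ < ∞`. -/
theorem genW_eq_sInf_plans
    {X : Type*} [MeasurableSpace X] [MetricSpace X] [BorelSpace X]
    [TopologicalSpace.SeparableSpace X] [CompleteSpace X]
    (a b : ℝ) (ha : 0 < a) (hb : 0 < b)
    (μ₁ μ₂ : Measure X) [IsFiniteMeasure μ₁] [IsFiniteMeasure μ₂] :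
    genW a b 1 μ₁ μ₂ =
      sInf {r : ℝ | ∃ γ : Measure (X × X), IsFiniteMeasure γ ∧
        (∫⁻ z, edist z.1 z.2 ∂γ) ≠ ∞ ∧
        r = a * tv μ₁ γ.fst + a * tv μ₂ γ.snd +
          b * (∫⁻ z, edist z.1 z.2 ∂γ).toReal} := by
  classical
  set D : Measure (X × X) → ℝ≥0∞ := fun γ => ∫⁻ z, edist z.1 z.2 ∂γ with hD
  set F : Measure (X × X) → ℝ≥0∞ := fun γ =>
    ENNReal.ofReal a * tvE μ₁ γ.fst + ENNReal.ofReal a * tvE μ₂ γ.snd +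
      ENNReal.ofReal b * D γ with hF
  set E : ℝ≥0∞ := ⨅ (γ : Measure (X × X)) (_ : IsFiniteMeasure γ) (_ : D γ ≠ ∞), F γ with hE
  -- basic facts
  have hFfin : ∀ γ : Measure (X × X), IsFiniteMeasure γ → D γ ≠ ∞ → F γ ≠ ∞ := by
    intro γ hγ hDγ
    haveI := hγ
    refine ENNReal.add_ne_top.2 ⟨ENNReal.add_ne_top.2 ⟨?_, ?_⟩, ?_⟩
    · exact ENNReal.mul_ne_top ENNReal.ofReal_ne_top (tvE_ne_top _ _)
    · exact ENNReal.mul_ne_top ENNReal.ofReal_ne_top (tvE_ne_top _ _)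
    · exact ENNReal.mul_ne_top ENNReal.ofReal_ne_top hDγ
  have hE_le_F : ∀ (γ : Measure (X × X)), IsFiniteMeasure γ → D γ ≠ ∞ → E ≤ F γ := by
    intro γ hγ hDγ
    exact iInf_le_of_le γ (iInf_le_of_le hγ (iInf_le _ hDγ))
  have hD0 : D 0 = 0 := lintegral_zero_measure _
  have hE_ne_top : E ≠ ∞ :=
    ((hE_le_F 0 inferInstance (by rw [hD0]; exact ENNReal.zero_ne_top)).trans_lt
      (hFfin 0 inferInstance (by rw [hD0]; exact ENNReal.zero_ne_top)).lt_top).ne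
  -- Part 1 : genWE = E
  have hgen : genWE a b 1 μ₁ μ₂ = E := by
    refine le_antisymm ?_ ?_
    · -- genWE ≤ E
      refine le_iInf fun γ => le_iInf fun hγ => le_iInf fun hDγ => ?_
      haveI := hγ
      rcases isEmpty_or_nonempty X with hX | hX
      · have hγ0 : γ = 0 := γ.eq_zero_of_isEmpty
        have hW0 : WpE (X := X) 1 0 0 = 0 := by
          rw [WpE]
          norm_num
        have hM0 : MemMp (X := X) 1 0 := ⟨inferInstance, fun x₀ => by simp⟩
        rw [genWE]
        refine le_trans (iInf_le_of_le 0 (iInf_le_of_le 0 (iInf_le_of_le hM0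
          (iInf_le_of_le hM0 (iInf_le _ rfl))))) ?_
        rw [hγ0, hW0]
        simp only [hF]
        simp [Measure.fst_zero, Measure.snd_zero]
      · obtain ⟨x₀⟩ := hX
        refine ENNReal.le_of_forall_pos_le_add fun ε hε hFlt => ?_
        set c : ℝ≥0∞ := 2 * ENNReal.ofReal a with hc
        have hc0 : c ≠ 0 := mul_ne_zero two_ne_zero (ENNReal.ofReal_pos.2 ha).ne'
        have hct : c ≠ ∞ := ENNReal.mul_ne_top (by norm_num) ENNReal.ofReal_ne_top
        set δ : ℝ≥0∞ := (ε : ℝ≥0∞) / c with hδ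
        have hδ0 : δ ≠ 0 := by
          rw [hδ]
          simp only [ne_eq, ENNReal.div_eq_zero_iff, hct, or_false]
          exact_mod_cast hε.ne'
        set S : ℕ → Set (X × X) :=
          fun n => (Metric.closedBall x₀ n) ×ˢ (Metric.closedBall x₀ n) with hS
        have hSmeas : ∀ n, MeasurableSet (S n) := fun n =>
          measurableSet_closedBall.prod measurableSet_closedBall
        have hSmono : Monotone S := fun i j hij =>
          Set.prod_mono (Metric.closedBall_subset_closedBall (by exact_mod_cast hij))
            (Metric.closedBall_subset_closedBall (by exact_mod_cast hij))
        have hSunion : ⋃ n, S n = Set.univ := by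
          ext z
          simp only [Set.mem_iUnion, Set.mem_univ, iff_true, hS, Set.mem_prod,
            Metric.mem_closedBall]
          obtain ⟨n, hn⟩ := exists_nat_ge (max (dist z.1 x₀) (dist z.2 x₀))
          exact ⟨n, (le_max_left _ _).trans hn, (le_max_right _ _).trans hn⟩
        have hsup : γ Set.univ = ⨆ n, γ (S n) := by
          rw [← hSunion]; exact hSmono.measure_iUnion
        obtain ⟨n, hδn⟩ : ∃ n, γ (S n)ᶜ ≤ δ := by
          by_cases hγ0 : γ Set.univ = 0
          · exact ⟨0, le_trans (le_trans (measure_mono (Set.subset_univ _)) hγ0.le) zero_le⟩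
          · have hlt : γ Set.univ - δ < γ Set.univ :=
              ENNReal.sub_lt_self (measure_ne_top γ _) hγ0 hδ0
            obtain ⟨n, hn⟩ := lt_iSup_iff.1 (hlt.trans_le hsup.le)
            refine ⟨n, ?_⟩
            rw [measure_compl (hSmeas n) (measure_ne_top γ _)]
            rw [tsub_le_iff_right, add_comm]
            exact tsub_le_iff_right.1 hn.le
        set R := γ.restrict (S n) with hR
        haveI : IsFiniteMeasure R := inferInstance
        have hmomf : MemMp 1 R.fst := memMp_one_fst_restrict γ x₀ n
        have hmoms : MemMp 1 R.snd := memMp_one_snd_restrict γ x₀ n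
        have hmass : R.fst Set.univ = R.snd Set.univ := by
          rw [Measure.fst_univ, Measure.snd_univ]
        have hstep : genWE a b 1 μ₁ μ₂ ≤
            ENNReal.ofReal a * tvE μ₁ R.fst + ENNReal.ofReal a * tvE μ₂ R.snd +
              ENNReal.ofReal b * WpE 1 R.fst R.snd := by
          rw [genWE]
          exact iInf_le_of_le R.fst (iInf_le_of_le R.snd (iInf_le_of_le hmomf
            (iInf_le_of_le hmoms (iInf_le _ hmass))))
        have hRle : R ≤ γ := Measure.restrict_le_self
        have hcomplle : γ Set.univ - R Set.univ ≤ δ := by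
          rw [hR, Measure.restrict_apply_univ, ← measure_compl (hSmeas n) (measure_ne_top γ _)]
            at *
          exact hδn
        have h1 : tvE μ₁ R.fst ≤ tvE μ₁ γ.fst + δ := by
          refine (tvE_le_of_le (Measure.fst_mono hRle)).trans (add_le_add le_rfl ?_)
          rw [Measure.fst_univ, Measure.fst_univ]
          exact hcomplle
        have h2 : tvE μ₂ R.snd ≤ tvE μ₂ γ.snd + δ := by
          refine (tvE_le_of_le (Measure.snd_mono hRle)).trans (add_le_add le_rfl ?_)
          rw [Measure.snd_univ, Measure.snd_univ]
          exact hcomplle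
        have h3 : WpE 1 R.fst R.snd ≤ D γ := by
          refine (WpE_one_le R).trans ?_
          rw [hD]
          exact lintegral_mono' hRle le_rfl
        calc genWE a b 1 μ₁ μ₂
            ≤ ENNReal.ofReal a * tvE μ₁ R.fst + ENNReal.ofReal a * tvE μ₂ R.snd +
              ENNReal.ofReal b * WpE 1 R.fst R.snd := hstep
          _ ≤ ENNReal.ofReal a * (tvE μ₁ γ.fst + δ) + ENNReal.ofReal a * (tvE μ₂ γ.snd + δ) +
              ENNReal.ofReal b * D γ :=
              add_le_add (add_le_add (mul_le_mul_right h1 _) (mul_le_mul_right h2 _))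
                (mul_le_mul_right h3 _)
          _ = F γ + c * δ := by simp only [hF, hc]; ring
          _ = F γ + ε := by rw [hδ, ENNReal.mul_div_cancel hc0 hct]
    · -- E ≤ genWE
      rw [genWE]
      refine le_iInf fun μ' => le_iInf fun ν' => le_iInf fun h₁ => le_iInf fun h₂ =>
        le_iInf fun hmass => ?_
      haveI := h₁.1
      haveI := h₂.1
      by_cases h0 : μ' Set.univ = 0
      · have hμ'0 : μ' = 0 := Measure.measure_univ_eq_zero.1 h0
        have hν'0 : ν' = 0 := Measure.measure_univ_eq_zero.1 (hmass.symm.trans h0)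
        rw [hμ'0, hν'0]
        refine le_trans (hE_le_F 0 inferInstance (by rw [hD0]; exact ENNReal.zero_ne_top)) ?_
        simp only [hF, Measure.fst_zero, Measure.snd_zero, hD0, mul_zero]
        exact add_le_add le_rfl zero_le
      · have hmt : μ' Set.univ ≠ ∞ := measure_ne_top μ' _
        haveI hcne : Nonempty {π : Measure (X × X) // IsCoupling μ' ν' π} :=
          ⟨⟨_, isCoupling_prod hmass h0⟩⟩
        have hW : WpE 1 μ' ν' = μ' Set.univ *
            ⨅ π : {π : Measure (X × X) // IsCoupling μ' ν' π}, ∫⁻ z, edist z.1 z.2 ∂π.1 := by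
          rw [WpE]
          norm_num [ENNReal.rpow_one]
        have hbm0 : ENNReal.ofReal b * μ' Set.univ ≠ 0 :=
          mul_ne_zero (ENNReal.ofReal_pos.2 hb).ne' h0
        have hbmt : ENNReal.ofReal b * μ' Set.univ ≠ ∞ :=
          ENNReal.mul_ne_top ENNReal.ofReal_ne_top hmt
        have key : ∀ π : {π : Measure (X × X) // IsCoupling μ' ν' π},
            E ≤ ENNReal.ofReal a * tvE μ₁ μ' + ENNReal.ofReal a * tvE μ₂ ν' +
              (ENNReal.ofReal b * μ' Set.univ) * ∫⁻ z, edist z.1 z.2 ∂π.1 := by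
          intro π
          by_cases hDπ : (∫⁻ z, edist z.1 z.2 ∂π.1) = ∞
          · rw [hDπ, ENNReal.mul_top hbm0]
            exact le_top.trans_eq (by rw [add_top])
          · haveI : IsProbabilityMeasure π.1 := π.2.1
            set γ := μ' Set.univ • π.1 with hγdef
            have hπu : π.1 Set.univ = 1 := measure_univ
            have hγfin : IsFiniteMeasure γ := ⟨by
              rw [hγdef, Measure.smul_apply, smul_eq_mul, hπu, mul_one]
              exact hmt.lt_top⟩
            have hDγ : D γ = μ' Set.univ * ∫⁻ z, edist z.1 z.2 ∂π.1 := by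
              rw [hD, hγdef]
              exact lintegral_smul_measure _ _
            have hfst : γ.fst = μ' := fst_smul_coupling π.2
            have hsnd : γ.snd = ν' := snd_smul_coupling hmass π.2
            refine le_trans (hE_le_F γ hγfin (by rw [hDγ]; exact ENNReal.mul_ne_top hmt hDπ)) ?_
            simp only [hF]
            rw [hfst, hsnd, hDγ, ← mul_assoc]
        calc E ≤ ⨅ π : {π : Measure (X × X) // IsCoupling μ' ν' π},
              (ENNReal.ofReal a * tvE μ₁ μ' + ENNReal.ofReal a * tvE μ₂ ν' +
                (ENNReal.ofReal b * μ' Set.univ) * ∫⁻ z, edist z.1 z.2 ∂π.1) := le_iInf key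
          _ = ENNReal.ofReal a * tvE μ₁ μ' + ENNReal.ofReal a * tvE μ₂ ν' +
              (ENNReal.ofReal b * μ' Set.univ) *
                ⨅ π : {π : Measure (X × X) // IsCoupling μ' ν' π},
                  ∫⁻ z, edist z.1 z.2 ∂π.1 := by
              rw [ENNReal.mul_iInf_of_ne hbm0 hbmt, ← ENNReal.add_iInf]
          _ = ENNReal.ofReal a * tvE μ₁ μ' + ENNReal.ofReal a * tvE μ₂ ν' +
              ENNReal.ofReal b * WpE 1 μ' ν' := by rw [hW, mul_assoc]
  -- Part 2 : convert to real infimum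
  have hval : ∀ γ : Measure (X × X), IsFiniteMeasure γ → D γ ≠ ∞ →
      a * tv μ₁ γ.fst + a * tv μ₂ γ.snd + b * (D γ).toReal = (F γ).toReal := by
    intro γ hγ hDγ
    haveI := hγ
    simp only [hF]
    rw [ENNReal.toReal_add (ENNReal.add_ne_top.2
        ⟨ENNReal.mul_ne_top ENNReal.ofReal_ne_top (tvE_ne_top _ _),
          ENNReal.mul_ne_top ENNReal.ofReal_ne_top (tvE_ne_top _ _)⟩)
        (ENNReal.mul_ne_top ENNReal.ofReal_ne_top hDγ),
      ENNReal.toReal_add (ENNReal.mul_ne_top ENNReal.ofReal_ne_top (tvE_ne_top _ _))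
        (ENNReal.mul_ne_top ENNReal.ofReal_ne_top (tvE_ne_top _ _)),
      ENNReal.toReal_mul, ENNReal.toReal_mul, ENNReal.toReal_mul,
      ENNReal.toReal_ofReal ha.le, ENNReal.toReal_ofReal hb.le, tv, tv]
  have hSetne : {r : ℝ | ∃ γ : Measure (X × X), IsFiniteMeasure γ ∧ D γ ≠ ∞ ∧
      r = a * tv μ₁ γ.fst + a * tv μ₂ γ.snd + b * (D γ).toReal}.Nonempty :=
    ⟨_, 0, inferInstance, (by rw [hD0]; exact ENNReal.zero_ne_top), rfl⟩
  have hSetbdd : BddBelow {r : ℝ | ∃ γ : Measure (X × X), IsFiniteMeasure γ ∧ D γ ≠ ∞ ∧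
      r = a * tv μ₁ γ.fst + a * tv μ₂ γ.snd + b * (D γ).toReal} := by
    refine ⟨0, fun r hr => ?_⟩
    obtain ⟨γ, hγ, hDγ, rfl⟩ := hr
    have t1 : (0 : ℝ) ≤ tv μ₁ γ.fst := ENNReal.toReal_nonneg
    have t2 : (0 : ℝ) ≤ tv μ₂ γ.snd := ENNReal.toReal_nonneg
    have t3 : (0 : ℝ) ≤ (D γ).toReal := ENNReal.toReal_nonneg
    positivity
  have hgw : genW a b 1 μ₁ μ₂ = E.toReal := by rw [genW, hgen]
  rw [hgw]
  show E.toReal = sInf {r : ℝ | ∃ γ : Measure (X × X), IsFiniteMeasure γ ∧ D γ ≠ ∞ ∧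
      r = a * tv μ₁ γ.fst + a * tv μ₂ γ.snd + b * (D γ).toReal}
  refine le_antisymm (le_csInf hSetne ?_) ?_
  case _ =>
    intro r hr
    obtain ⟨γ, hγfin, hDγ, rfl⟩ := hr
    rw [hval γ hγfin hDγ]
    exact (ENNReal.toReal_le_toReal hE_ne_top (hFfin γ hγfin hDγ)).2 (hE_le_F γ hγfin hDγ)
  · refine le_of_forall_pos_le_add fun ε hε => ?_
    have hlt : (⨅ (γ : Measure (X × X)) (_ : IsFiniteMeasure γ) (_ : D γ ≠ ∞), F γ) <
        E + ENNReal.ofReal ε :=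
      ENNReal.lt_add_right hE_ne_top (ENNReal.ofReal_pos.2 hε).ne'
    obtain ⟨γ, hγlt⟩ := iInf_lt_iff.1 hlt
    obtain ⟨hγfin, hγlt⟩ := iInf_lt_iff.1 hγlt
    obtain ⟨hDγ, hγlt⟩ := iInf_lt_iff.1 hγlt
    have hmem : a * tv μ₁ γ.fst + a * tv μ₂ γ.snd + b * (D γ).toReal ∈
        {r : ℝ | ∃ γ : Measure (X × X), IsFiniteMeasure γ ∧ D γ ≠ ∞ ∧
          r = a * tv μ₁ γ.fst + a * tv μ₂ γ.snd + b * (D γ).toReal} :=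
      ⟨γ, hγfin, hDγ, rfl⟩
    calc sInf _ ≤ a * tv μ₁ γ.fst + a * tv μ₂ γ.snd + b * (D γ).toReal :=
          csInf_le hSetbdd hmem
      _ = (F γ).toReal := hval γ hγfin hDγ
      _ ≤ (E + ENNReal.ofReal ε).toReal := by
          refine (ENNReal.toReal_le_toReal (hFfin γ hγfin hDγ) ?_).2 hγlt.le
          exact ENNReal.add_ne_top.2 ⟨hE_ne_top, ENNReal.ofReal_ne_top⟩
      _ = E.toReal + ε := by
          rw [ENNReal.toReal_add hE_ne_top ENNReal.ofReal_ne_top, ENNReal.toReal_ofReal hε.le]
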